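/- Let ℓ ≥ 2 and d ≥ 3 be integers with ℓ ∤ (d-1), and set b = ⌊(d-2)/ℓ⌋. Then the strict inequality C((b+1)ℓ+1, d-1) + C((b+2)ℓ, d-1) > C(ℓ+d-1, d-1) + d·C((b+1)ℓ, d-1) holds. -/
import Mathlib

/-- Repeated Pascal: adding `s` to the top index gains at least `s` copies of
`choose m j`. -/
lemma chain_aux (m j : ℕ) (h : j ≤ m) :
    ∀ s, Nat.choose m (j + 1) + s * Nat.choose m j ≤ Nat.choose (m + s) (j + 1) := by
  intro s
  induction s with
  | zero => simp
  | succ n ih =>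
    have h1 : Nat.choose m j ≤ Nat.choose (m + n) j :=
      Nat.choose_le_choose _ (by omega)
    have h2 : Nat.choose (m + (n + 1)) (j + 1)
        = Nat.choose (m + n) j + Nat.choose (m + n) (j + 1) := by
      rw [show m + (n + 1) = (m + n) + 1 by ring]
      exact Nat.choose_succ_succ (m + n) j
    rw [Nat.succ_mul]
    omega

/-- Core inequality. -/
lemma key' (N j t u : ℕ) (hj : 1 ≤ j) (hu : 2 ≤ u) (hN : N = j + u) :
    Nat.choose (N + t + 1) (j + 1) + (j + 2) * Nat.choose N (j + 1) <
      Nat.choose (N + 1) (j + 1) + Nat.choose (N + t + u) (j + 1) := by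
  obtain ⟨v, rfl⟩ : ∃ v, u = v + 1 := ⟨u - 1, by omega⟩
  have hv : 1 ≤ v := by omega
  -- identity: (j+1) * C(N, j+1) = u * C(N, j)
  have id1 : Nat.choose N (j + 1) * (j + 1) = Nat.choose N j * (v + 1) := by
    rw [Nat.choose_succ_right_eq N j]
    congr 1
    omega
  -- Pascal on C(N+1, j+1)
  have pas : Nat.choose (N + 1) (j + 1) = Nat.choose N j + Nat.choose N (j + 1) :=
    Nat.choose_succ_succ N j
  -- strict monotonicity: C(N, j) < C(N+t+1, j)
  obtain ⟨i, rfl⟩ : ∃ i, j = i + 1 := ⟨j - 1, by omega⟩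
  have e : Nat.choose (N + 1) (i + 1) = Nat.choose N i + Nat.choose N (i + 1) :=
    Nat.choose_succ_succ N i
  have p1 : 0 < Nat.choose N i := Nat.choose_pos (by omega)
  have mono : Nat.choose (N + 1) (i + 1) ≤ Nat.choose (N + t + 1) (i + 1) :=
    Nat.choose_le_choose _ (by omega)
  have hD : Nat.choose N (i + 1) + 1 ≤ Nat.choose (N + t + 1) (i + 1) := by omega
  -- chain
  have hch := chain_aux (N + t + 1) (i + 1) (by omega) v
  rw [show N + t + 1 + v = N + t + (v + 1) by ring] at hch
  -- products
  have hprod : v * (Nat.choose N (i + 1) + 1) ≤ v * Nat.choose (N + t + 1) (i + 1) :=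
    Nat.mul_le_mul_left v hD
  have hmul1 : v * (Nat.choose N (i + 1) + 1) = v * Nat.choose N (i + 1) + v := by ring
  have hjB : (i + 1 + 2) * Nat.choose N (i + 1 + 1)
      = Nat.choose N (i + 1 + 1) * (i + 1 + 1) + Nat.choose N (i + 1 + 1) := by ring
  have hid : Nat.choose N (i + 1 + 1) * (i + 1 + 1)
      = Nat.choose N (i + 1) * (v + 1) := id1
  have hmul2 : Nat.choose N (i + 1) * (v + 1)
      = v * Nat.choose N (i + 1) + Nat.choose N (i + 1) := by ring
  omega

theorem stmt18 (ℓ d b : ℕ) (hl : 2 ≤ ℓ) (hd : 3 ≤ d) (hndvd : ¬ ℓ ∣ (d - 1))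
    (hb : b = (d - 2) / ℓ) :
    Nat.choose (ℓ + d - 1) (d - 1) + d * Nat.choose ((b + 1) * ℓ) (d - 1) <
      Nat.choose ((b + 1) * ℓ + 1) (d - 1) + Nat.choose ((b + 2) * ℓ) (d - 1) := by
  -- set up r with d - 1 = b*ℓ + r, 1 ≤ r ≤ ℓ - 1
  have hdm := Nat.div_add_mod (d - 2) ℓ
  have hmlt : (d - 2) % ℓ < ℓ := Nat.mod_lt _ (by omega)
  have hbl : b * ℓ + (d - 2) % ℓ = d - 2 := by
    rw [hb, Nat.mul_comm]; omega
  set r : ℕ := (d - 2) % ℓ + 1 with hr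
  have hk : d - 1 = b * ℓ + r := by omega
  have hrub : r ≤ ℓ - 1 := by
    by_contra hcon
    have : r = ℓ := by omega
    refine hndvd ⟨b + 1, ?_⟩
    have hh : ℓ * (b + 1) = b * ℓ + ℓ := by ring
    omega
  have hbe : (b + 1) * ℓ = b * ℓ + ℓ := by ring
  have hbe2 : (b + 2) * ℓ = b * ℓ + ℓ + ℓ := by ring
  -- instantiate the key lemma
  have h := key' ((b + 1) * ℓ) (d - 2) (r - 1) (ℓ - r + 1) (by omega) (by omega)
    (by omega)
  have e1 : (b + 1) * ℓ + (r - 1) + 1 = ℓ + d - 1 := by omega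
  have e2 : d - 2 + 1 = d - 1 := by omega
  have e3 : d - 2 + 2 = d := by omega
  have e4 : (b + 1) * ℓ + (r - 1) + (ℓ - r + 1) = (b + 2) * ℓ := by omega
  rw [e1, e2, e3, e4] at h
  omega
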